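/- arXiv:2509.00424 — 3 statements merged into one kernel-verified Lean document; each statement's English description precedes it below -/
import Mathlib

section
/- Matrix-product (MPS/tensor-train) representation with bond dimensions equal to the unfolding ranks (linear-algebra core of Theorem 2). Let V be a finite-dimensional real vector space, q ≥ 1, T ≥ 1, and let C : (Fin T → Fin q) → V be a V-valued tensor with T physical indices each ranging over Fin q. For 1 ≤ τ ≤ T−1 let R_τ denote the cut-τ unfolding rank of C. Then there exist bond dimensions D_0 = 1 and D_τ = R_τ for 1 ≤ τ ≤ T−1, real matrices A_t(j) ∈ Matrix (Fin D_t) (Fin D_{t−1}) ℝ for each time t with 1 ≤ t ≤ T−1 and each physical index value j : Fin q, and a V-valued boundary tensor v : Fin q → Fin D_{T−1} → V, such that for every φ : Fin T → Fin q (writing φ_t for the index at time t, times labeled 1,…,T): C φ = ∑_{a_{T−1} : Fin D_{T−1}} ⋯ ∑_{a_1 : Fin D_1} ( [A_1(φ_1)]_{a_1,0} · [A_2(φ_2)]_{a_2,a_1} ⋯ [A_{T−1}(φ_{T−1})]_{a_{T−1},a_{T−2}} ) • v (φ_T) (a_{T−1}). -/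
set_option linter.unusedSectionVars false
set_option linter.unreachableTactic false
set_option linter.unusedTactic false
set_option linter.unusedVariables false



/-- Concatenate a past tuple `p` (times `1,…,τ`) with a future tuple `f`
(times `τ+1,…,T`) into a full index tuple of length `T`. -/
def glueTuple (q T τ : ℕ) (p : Fin τ → Fin q) (f : Fin (T - τ) → Fin q) :
    Fin T → Fin q :=
  fun i => if h : i.val < τ then p ⟨i.val, h⟩
           else f ⟨i.val - τ, by have := i.isLt; omega⟩

/-- The column function of a past tuple `p`:
`f ↦ C (p ⌢ f)`, an element of `(Fin (T - τ) → Fin q) → V`. -/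
def columnFun (q T : ℕ) {V : Type*} [AddCommGroup V] [Module ℝ V]
    (C : (Fin T → Fin q) → V) (τ : ℕ) (p : Fin τ → Fin q) :
    (Fin (T - τ) → Fin q) → V :=
  fun f => C (glueTuple q T τ p f)

/-- The cut-`τ` unfolding rank of a tensor `C : (Fin T → Fin q) → V`: the
dimension of the span of the column functions of all past tuples. -/
noncomputable def unfoldingRank (q T : ℕ) {V : Type*} [AddCommGroup V] [Module ℝ V]
    (C : (Fin T → Fin q) → V) (τ : ℕ) : ℕ :=
  Module.finrank ℝ
    (Submodule.span ℝ (Set.range (fun p : Fin τ → Fin q => columnFun q T C τ p)))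

namespace MPSAux

variable (q T : ℕ) {V : Type*} [AddCommGroup V] [Module ℝ V] [FiniteDimensional ℝ V]
  (C : (Fin T → Fin q) → V)

def W (τ : ℕ) : Submodule ℝ ((Fin (T - τ) → Fin q) → V) :=
  Submodule.span ℝ (Set.range (fun p : Fin τ → Fin q => columnFun q T C τ p))

noncomputable def D : ℕ → ℕ
  | 0 => 1
  | (n+1) => unfoldingRank q T C (n+1)

noncomputable def bb : (τ : ℕ) → Fin (D q T C τ) → (W q T C τ)
  | 0 => fun _ => ⟨columnFun q T C 0 (fun i => i.elim0), Submodule.subset_span ⟨_, rfl⟩⟩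
  | (n+1) => fun α => Module.finBasis ℝ (W q T C (n+1)) α

def snocP {q τ : ℕ} (p : Fin τ → Fin q) (j : Fin q) : Fin (τ+1) → Fin q :=
  fun i => if h : i.val < τ then p ⟨i.val, h⟩ else j

def consF {q : ℕ} (T τ : ℕ) (j : Fin q) (f : Fin (T - (τ+1)) → Fin q) :
    Fin (T - τ) → Fin q :=
  fun k => if h : k.val = 0 then j else f ⟨k.val - 1, by have := k.isLt; omega⟩

def curryMap (τ : ℕ) (j : Fin q) :
    ((Fin (T - τ) → Fin q) → V) →ₗ[ℝ] ((Fin (T - (τ+1)) → Fin q) → V) where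
  toFun x := fun f => x (consF T τ j f)
  map_add' _ _ := rfl
  map_smul' _ _ := rfl

lemma curry_column (τ : ℕ) (j : Fin q) (p : Fin τ → Fin q) :
    curryMap q T (V := V) τ j (columnFun q T C τ p) = columnFun q T C (τ+1) (snocP p j) := by
  funext f
  show C (glueTuple q T τ p (consF T τ j f)) = C (glueTuple q T (τ+1) (snocP p j) f)
  congr 1
  funext i
  simp only [glueTuple, consF, snocP]
  split_ifs <;>
    first
      | rfl
      | omega
      | (exact congrArg f (Fin.ext (by simp; omega)))
      | (exact absurd rfl (by omega))
      | skip

lemma curry_mem (τ : ℕ) (j : Fin q) {x} (hx : x ∈ W q T C τ) :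
    curryMap q T (V := V) τ j x ∈ W q T C (τ+1) := by
  have hle : W q T C τ ≤ (W q T C (τ+1)).comap (curryMap q T (V := V) τ j) := by
    rw [W, Submodule.span_le]
    rintro _ ⟨p, rfl⟩
    exact Submodule.subset_span ⟨snocP p j, (curry_column q T C τ j p).symm⟩
  exact hle hx

noncomputable def Amat : (t : ℕ) → Fin q → Matrix (Fin (D q T C t)) (Fin (D q T C (t-1))) ℝ
  | 0 => fun _ => 0
  | (n+1) => fun j β α =>
      (Module.finBasis ℝ (W q T C (n+1))).repr
        ⟨curryMap q T n j ((bb q T C n α).val),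
          curry_mem q T C n j (bb q T C n α).2⟩ β


lemma expand (n : ℕ) (j : Fin q) (α : Fin (D q T C n)) :
    curryMap q T (V := V) n j ((bb q T C n α).val)
      = ∑ β : Fin (D q T C (n+1)), Amat q T C (n+1) j β α • ((bb q T C (n+1) β).val) := by
  have h := (Module.finBasis ℝ (W q T C (n+1))).sum_repr
    ⟨curryMap q T (V := V) n j ((bb q T C n α).val),
      curry_mem q T C n j (bb q T C n α).2⟩
  have h2 := congrArg Subtype.val h.symm
  rw [Submodule.coe_sum] at h2
  exact h2

noncomputable def cc (ψ : ℕ → Fin q) : (m : ℕ) → Fin (D q T C m) → ℝ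
  | 0 => fun _ => 1
  | (m+1) => fun β => ∑ α : Fin (D q T C m), Amat q T C (m+1) (ψ m) β α * cc ψ m α

def tailF (m : ℕ) (φ : Fin T → Fin q) : Fin (T - m) → Fin q :=
  fun k => φ ⟨m + k.val, by have := k.isLt; omega⟩

lemma cons_tail (m : ℕ) (hm : m < T) (φ : Fin T → Fin q) :
    consF T m (φ ⟨m, hm⟩) (tailF q T (m+1) φ) = tailF q T m φ := by
  funext k
  simp only [consF, tailF]
  split_ifs with h
  · exact congrArg φ (Fin.ext (by simp; omega))
  · exact congrArg φ (Fin.ext (by simp; omega))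

lemma invariant (ψ : ℕ → Fin q) (φ : Fin T → Fin q)
    (h : ∀ k (hk : k < T), ψ k = φ ⟨k, hk⟩) :
    ∀ m, m < T →
      ∑ α : Fin (D q T C m), cc q T C ψ m α • (bb q T C m α).val (tailF q T m φ) = C φ := by
  intro m
  induction m with
  | zero =>
    intro _
    have hone : ∀ α : Fin (D q T C 0),
        cc q T C ψ 0 α • (bb q T C 0 α).val (tailF q T 0 φ) = C φ := by
      intro α
      show (1:ℝ) • C (glueTuple q T 0 (fun i => i.elim0) (tailF q T 0 φ)) = C φ
      rw [one_smul]
      congr 1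
      funext i
      show tailF q T 0 φ ⟨i.val - 0, by have := i.isLt; omega⟩ = φ i
      exact congrArg φ (Fin.ext (by simp [tailF]))
    rw [Finset.sum_congr rfl (fun α _ => hone α), Finset.sum_const, Finset.card_univ,
      Fintype.card_fin]
    show (1:ℕ) • C φ = C φ
    rw [one_smul]
  | succ m ih =>
    intro hm1
    have hm : m < T := by omega
    have key : ∀ α : Fin (D q T C m),
        ∑ β : Fin (D q T C (m+1)),
            Amat q T C (m+1) (ψ m) β α • (bb q T C (m+1) β).val (tailF q T (m+1) φ)
          = (bb q T C m α).val (tailF q T m φ) := by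
      intro α
      have he := congrFun (expand q T C m (ψ m) α) (tailF q T (m+1) φ)
      rw [Finset.sum_apply] at he
      simp only [Pi.smul_apply] at he
      rw [← he]
      show (bb q T C m α).val (consF T m (ψ m) (tailF q T (m+1) φ)) = _
      rw [h m hm, cons_tail q T m hm φ]
    calc ∑ β : Fin (D q T C (m+1)),
          cc q T C ψ (m+1) β • (bb q T C (m+1) β).val (tailF q T (m+1) φ)
        = ∑ β : Fin (D q T C (m+1)), ∑ α : Fin (D q T C m),
            (Amat q T C (m+1) (ψ m) β α * cc q T C ψ m α)
              • (bb q T C (m+1) β).val (tailF q T (m+1) φ) := by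
          refine Finset.sum_congr rfl fun β _ => ?_
          show (∑ α : Fin (D q T C m), Amat q T C (m+1) (ψ m) β α * cc q T C ψ m α) • _ = _
          rw [Finset.sum_smul]
      _ = ∑ α : Fin (D q T C m), ∑ β : Fin (D q T C (m+1)),
            (Amat q T C (m+1) (ψ m) β α * cc q T C ψ m α)
              • (bb q T C (m+1) β).val (tailF q T (m+1) φ) := Finset.sum_comm
      _ = ∑ α : Fin (D q T C m), cc q T C ψ m α •
            ∑ β : Fin (D q T C (m+1)),
              Amat q T C (m+1) (ψ m) β α • (bb q T C (m+1) β).val (tailF q T (m+1) φ) := by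
          refine Finset.sum_congr rfl fun α _ => ?_
          rw [Finset.smul_sum]
          refine Finset.sum_congr rfl fun β _ => ?_
          rw [smul_smul, mul_comm]
      _ = ∑ α : Fin (D q T C m), cc q T C ψ m α • (bb q T C m α).val (tailF q T m φ) := by
          refine Finset.sum_congr rfl fun α _ => ?_
          rw [key α]
      _ = C φ := ih hm

def splitEquiv (Dd : ℕ → ℕ) (n : ℕ) :
    ((τ : Fin (n+2)) → Fin (Dd τ.val)) ≃ ((τ : Fin (n+1)) → Fin (Dd τ.val)) × Fin (Dd (n+1)) where
  toFun a := (fun τ => a ⟨τ.val, by omega⟩, a ⟨n+1, by omega⟩)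
  invFun x := fun τ =>
    if h : τ.val < n + 1 then x.1 ⟨τ.val, h⟩
    else ⟨(x.2).val, by
      have hτ : τ.val = n+1 := by have := τ.isLt; omega
      rw [hτ]; exact (x.2).isLt⟩
  left_inv a := by
    funext τ
    obtain ⟨tv, htv⟩ := τ
    by_cases h : tv < n+1
    · simp only [dif_pos h]
    · simp only [dif_neg h]
      have hv : tv = n + 1 := by omega
      subst hv
      rfl
  right_inv x := by
    refine Prod.ext ?_ ?_
    · funext τ
      simp only [dif_pos τ.isLt]
    · simp only [dif_neg (lt_irrefl (n+1))]

lemma path_sum (ψ : ℕ → Fin q) : ∀ (n : ℕ) (g : Fin (D q T C n) → V),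
    ∑ a : (τ : Fin (n+1)) → Fin (D q T C τ.val),
      (∏ t : Fin n,
        Amat q T C (t.val + 1) (ψ t.val)
          (a ⟨t.val + 1, by have := t.isLt; omega⟩)
          (a ⟨t.val, by have := t.isLt; omega⟩))
        • g (a ⟨n, by omega⟩)
    = ∑ α : Fin (D q T C n), cc q T C ψ n α • g α := by
  intro n
  induction n with
  | zero =>
    intro g
    let e : ((τ : Fin 1) → Fin (D q T C τ.val)) ≃ Fin (D q T C 0) :=
      { toFun := fun a => a ⟨0, Nat.zero_lt_one⟩
        invFun := fun α τ => ⟨α.val, by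
          have hv : τ.val = 0 := by have := τ.isLt; omega
          rw [hv]; exact α.isLt⟩
        left_inv := fun a => by
          funext τ
          obtain ⟨tv, htv⟩ := τ
          have hv : tv = 0 := by omega
          subst hv
          rfl
        right_inv := fun α => Fin.ext rfl }
    rw [Fintype.sum_equiv e _ (fun α => (1:ℝ) • g α) (fun a => by
      simp only [Finset.univ_eq_empty, Finset.prod_empty]
      rfl)]
    refine Finset.sum_congr rfl fun α _ => ?_
    show (1:ℝ) • g α = cc q T C ψ 0 α • g α
    rfl
  | succ n ih =>
    intro g
    set g' : Fin (D q T C n) → V :=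
      fun α => ∑ β : Fin (D q T C (n+1)), Amat q T C (n+1) (ψ n) β α • g β with hg'
    have step1 :
        ∑ a : (τ : Fin (n+2)) → Fin (D q T C τ.val),
          (∏ t : Fin (n+1),
            Amat q T C (t.val + 1) (ψ t.val)
              (a ⟨t.val + 1, by have := t.isLt; omega⟩)
              (a ⟨t.val, by have := t.isLt; omega⟩))
            • g (a ⟨n+1, by omega⟩)
        = ∑ x : ((τ : Fin (n+1)) → Fin (D q T C τ.val)) × Fin (D q T C (n+1)),
            ((∏ t : Fin n,
              Amat q T C (t.val + 1) (ψ t.val)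
                (x.1 ⟨t.val + 1, by have := t.isLt; omega⟩)
                (x.1 ⟨t.val, by have := t.isLt; omega⟩))
              * Amat q T C (n+1) (ψ n) x.2 (x.1 ⟨n, by omega⟩)) • g x.2 := by
      refine Fintype.sum_equiv (splitEquiv (D q T C) n) _ _ fun a => ?_
      rw [Fin.prod_univ_castSucc]
      rfl
    rw [step1, Fintype.sum_prod_type]
    have step2 :
        ∀ a : (τ : Fin (n+1)) → Fin (D q T C τ.val),
          ∑ β : Fin (D q T C (n+1)),
            ((∏ t : Fin n,
              Amat q T C (t.val + 1) (ψ t.val)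
                (a ⟨t.val + 1, by have := t.isLt; omega⟩)
                (a ⟨t.val, by have := t.isLt; omega⟩))
              * Amat q T C (n+1) (ψ n) β (a ⟨n, by omega⟩)) • g β
          = (∏ t : Fin n,
              Amat q T C (t.val + 1) (ψ t.val)
                (a ⟨t.val + 1, by have := t.isLt; omega⟩)
                (a ⟨t.val, by have := t.isLt; omega⟩)) • g' (a ⟨n, by omega⟩) := by
      intro a
      rw [hg', Finset.smul_sum]
      refine Finset.sum_congr rfl fun β _ => ?_
      rw [smul_smul]
    rw [Finset.sum_congr rfl (fun a _ => step2 a), ih g']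
    calc ∑ α : Fin (D q T C n), cc q T C ψ n α • g' α
        = ∑ α : Fin (D q T C n), ∑ β : Fin (D q T C (n+1)),
            (Amat q T C (n+1) (ψ n) β α * cc q T C ψ n α) • g β := by
          refine Finset.sum_congr rfl fun α _ => ?_
          rw [hg', Finset.smul_sum]
          refine Finset.sum_congr rfl fun β _ => ?_
          rw [smul_smul, mul_comm]
      _ = ∑ β : Fin (D q T C (n+1)), ∑ α : Fin (D q T C n),
            (Amat q T C (n+1) (ψ n) β α * cc q T C ψ n α) • g β := Finset.sum_comm
      _ = ∑ β : Fin (D q T C (n+1)), cc q T C ψ (n+1) β • g β := by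
          refine Finset.sum_congr rfl fun β _ => ?_
          rw [← Finset.sum_smul]
          rfl


end MPSAux

/-- **MPS existence with bond dimensions equal to the unfolding ranks**
(linear-algebra core of Theorem 2): every `V`-valued tensor with `T` physical
indices admits a matrix-product (tensor-train) representation whose bond
dimension at cut `τ` equals the cut-`τ` unfolding rank. -/
theorem mps_existence (q T : ℕ) (hq : 1 ≤ q) (hT : 1 ≤ T)
    {V : Type*} [AddCommGroup V] [Module ℝ V] [FiniteDimensional ℝ V]
    (C : (Fin T → Fin q) → V) :
    ∃ D : ℕ → ℕ, D 0 = 1 ∧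
      (∀ τ : ℕ, 1 ≤ τ → τ ≤ T - 1 → D τ = unfoldingRank q T C τ) ∧
      ∃ (A : (t : ℕ) → Fin q → Matrix (Fin (D t)) (Fin (D (t - 1))) ℝ)
        (v : Fin q → Fin (D (T - 1)) → V),
        ∀ φ : Fin T → Fin q,
          C φ = ∑ a : (τ : Fin T) → Fin (D τ.val),
            (∏ t : Fin (T - 1),
              A (t.val + 1) (φ ⟨t.val, by have := t.isLt; omega⟩)
                (a ⟨t.val + 1, by have := t.isLt; omega⟩)
                (a ⟨t.val, by have := t.isLt; omega⟩))
            • v (φ ⟨T - 1, by omega⟩) (a ⟨T - 1, by omega⟩) := by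
  obtain ⟨n, rfl⟩ : ∃ n, T = n + 1 := ⟨T - 1, by omega⟩
  refine ⟨MPSAux.D q (n+1) C, rfl, ?_, MPSAux.Amat q (n+1) C,
    fun j α => (MPSAux.bb q (n+1) C n α).val (fun _ => j), ?_⟩
  · intro τ h1 h2
    cases τ with
    | zero => omega
    | succ m => rfl
  · intro φ
    set ψ : ℕ → Fin q := fun k => φ ⟨min k n, by omega⟩ with hψdef
    have hψ : ∀ (k : ℕ) (hk : k < n + 1), φ ⟨k, hk⟩ = ψ k := by
      intro k hk
      exact congrArg φ (Fin.ext (by simp [hψdef]; omega))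
    have hinv := MPSAux.invariant q (n+1) C ψ φ (fun k hk => (hψ k hk).symm) n (by omega)
    have htail : MPSAux.tailF q (n+1) n φ = fun _ => ψ n := by
      funext k
      refine congrArg φ (Fin.ext ?_)
      have := k.isLt
      simp only [MPSAux.tailF, hψdef]
      simp
      omega
    rw [htail] at hinv
    have hpath := MPSAux.path_sum q (n+1) C ψ n
      (fun α => (MPSAux.bb q (n+1) C n α).val (fun _ => ψ n))
    simp only [hψ]
    exact hinv.symm.trans hpath.symm
end

section
/- Kernel tensors pairwise commute: fix t, q : ℕ and set I := Fin (q+1) (with 0 the null index). Let c : Finset (Fin t) → ((Fin t) → I) → ℝ be a cumulant family satisfying (i) locality: c Θ φ = c Θ φ' whenever φ τ = φ' τ for all τ ∈ Θ, and (ii) null-vanishing: c Θ φ = 0 whenever there exists τ ∈ Θ with φ τ = 0. For each nonempty Θ : Finset (Fin t), define the kernel tensor K Θ as the square matrix indexed by tuples (Fin t → I) with entries K Θ Φ' Φ := (if Φ' = Φ then 1 else 0) + (if ((∀ τ ∉ Θ, Φ' τ = Φ τ) ∧ (∀ τ ∈ Θ, Φ' τ = 0)) then 1 else 0) * c Θ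 Φ. Then for all nonempty Θ₁, Θ₂ : Finset (Fin t), the matrix products satisfy K Θ₁ * K Θ₂ = K Θ₂ * K Θ₁ (whether or not Θ₁ and Θ₂ overlap). -/
/-- The kernel tensor `K̃(Θ)` associated to a cumulant family `c`: the matrix on
index-tuple space with entries
`K Θ Φ' Φ = δ_{Φ',Φ} + δ(Φ' = Φ off Θ)·δ(Φ' = 0 on Θ)·c Θ Φ`. -/
def Ker (t q : ℕ) (c : Finset (Fin t) → ((Fin t) → Fin (q + 1)) → ℝ)
    (Θ : Finset (Fin t)) :
    Matrix ((Fin t) → Fin (q + 1)) ((Fin t) → Fin (q + 1)) ℝ :=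
  fun Φ' Φ =>
    (if Φ' = Φ then 1 else 0)
      + (if ((∀ τ ∉ Θ, Φ' τ = Φ τ) ∧ (∀ τ ∈ Θ, Φ' τ = 0)) then 1 else 0) * c Θ Φ

/-- The non-identity part of the kernel tensor. -/
def NKer (t q : ℕ) (c : Finset (Fin t) → ((Fin t) → Fin (q + 1)) → ℝ)
    (Θ : Finset (Fin t)) :
    Matrix ((Fin t) → Fin (q + 1)) ((Fin t) → Fin (q + 1)) ℝ :=
  fun Φ' Φ =>
    (if ((∀ τ ∉ Θ, Φ' τ = Φ τ) ∧ (∀ τ ∈ Θ, Φ' τ = 0)) then 1 else 0) * c Θ Φ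

lemma NKer_mul_NKer (t q : ℕ) (c : Finset (Fin t) → ((Fin t) → Fin (q + 1)) → ℝ)
    (hloc : ∀ (Θ : Finset (Fin t)) (φ φ' : (Fin t) → Fin (q + 1)),
      (∀ τ ∈ Θ, φ τ = φ' τ) → c Θ φ = c Θ φ')
    (hnull : ∀ (Θ : Finset (Fin t)) (φ : (Fin t) → Fin (q + 1)),
      (∃ τ ∈ Θ, φ τ = 0) → c Θ φ = 0)
    (Θ₁ Θ₂ : Finset (Fin t)) :
    NKer t q c Θ₁ * NKer t q c Θ₂ = fun Φ' Φ =>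
      if Disjoint Θ₁ Θ₂ then
        (if ((∀ τ ∉ Θ₁ ∪ Θ₂, Φ' τ = Φ τ) ∧ (∀ τ ∈ Θ₁ ∪ Θ₂, Φ' τ = 0)) then 1 else 0)
          * (c Θ₁ Φ * c Θ₂ Φ)
      else 0 := by
  funext Φ' Φ
  show (NKer t q c Θ₁ * NKer t q c Θ₂) Φ' Φ = _
  rw [Matrix.mul_apply]
  by_cases hd : Disjoint Θ₁ Θ₂
  · simp only [hd, if_true]
    set Ψ₀ : Fin t → Fin (q + 1) := fun τ => if τ ∈ Θ₂ then 0 else Φ τ with hΨ₀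
    rw [Finset.sum_eq_single Ψ₀]
    · unfold NKer
      have hQ : (∀ τ ∉ Θ₂, Ψ₀ τ = Φ τ) ∧ (∀ τ ∈ Θ₂, Ψ₀ τ = 0) := by
        constructor <;> intro τ hτ <;> simp [hΨ₀, hτ]
      have hc : c Θ₁ Ψ₀ = c Θ₁ Φ := by
        apply hloc; intro τ hτ
        have hτ2 : τ ∉ Θ₂ := fun h => Finset.disjoint_left.mp hd hτ h
        simp [hΨ₀, hτ2]
      rw [if_pos hQ, hc]
      have hP : ((∀ τ ∉ Θ₁, Φ' τ = Ψ₀ τ) ∧ (∀ τ ∈ Θ₁, Φ' τ = 0))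
          ↔ ((∀ τ ∉ Θ₁ ∪ Θ₂, Φ' τ = Φ τ) ∧ (∀ τ ∈ Θ₁ ∪ Θ₂, Φ' τ = 0)) := by
        constructor
        · rintro ⟨hp1, hp2⟩
          refine ⟨fun τ hτ => ?_, fun τ hτ => ?_⟩
          · simp only [Finset.mem_union, not_or] at hτ
            have := hp1 τ hτ.1
            simpa [hΨ₀, hτ.2] using this
          · rcases Finset.mem_union.mp hτ with h | h
            · exact hp2 τ h
            · have hτ1 : τ ∉ Θ₁ := fun hh => Finset.disjoint_left.mp hd hh h
              have := hp1 τ hτ1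
              simpa [hΨ₀, h] using this
        · rintro ⟨hp1, hp2⟩
          refine ⟨fun τ hτ => ?_, fun τ hτ => hp2 τ (Finset.mem_union_left _ hτ)⟩
          by_cases hτ2 : τ ∈ Θ₂
          · simp only [hΨ₀, hτ2, if_true]
            exact hp2 τ (Finset.mem_union_right _ hτ2)
          · simp only [hΨ₀, hτ2, if_false]
            exact hp1 τ (by simp [Finset.mem_union, hτ, hτ2])
      by_cases hP' : (∀ τ ∉ Θ₁ ∪ Θ₂, Φ' τ = Φ τ) ∧ (∀ τ ∈ Θ₁ ∪ Θ₂, Φ' τ = 0)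
      · rw [if_pos (hP.mpr hP'), if_pos hP']; ring
      · rw [if_neg (fun h => hP' (hP.mp h)), if_neg hP']; ring
    · intro Ψ _ hΨ
      unfold NKer
      have hnq : ¬((∀ τ ∉ Θ₂, Ψ τ = Φ τ) ∧ (∀ τ ∈ Θ₂, Ψ τ = 0)) := by
        rintro ⟨hq1, hq2⟩
        apply hΨ; funext τ
        by_cases hτ : τ ∈ Θ₂
        · simp [hΨ₀, hτ, hq2 τ hτ]
        · simp [hΨ₀, hτ, hq1 τ hτ]
      rw [if_neg hnq]; ring
    · intro h; exact absurd (Finset.mem_univ _) h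
  · simp only [hd, if_false]
    apply Finset.sum_eq_zero
    intro Ψ _
    unfold NKer
    rcases Finset.not_disjoint_iff.mp hd with ⟨τ, hτ1, hτ2⟩
    by_cases hQ : (∀ τ ∉ Θ₂, Ψ τ = Φ τ) ∧ (∀ τ ∈ Θ₂, Ψ τ = 0)
    · have hz : c Θ₁ Ψ = 0 := hnull _ _ ⟨τ, hτ1, hQ.2 τ hτ2⟩
      rw [hz]; ring
    · rw [if_neg hQ]; ring

lemma Ker_eq (t q : ℕ) (c : Finset (Fin t) → ((Fin t) → Fin (q + 1)) → ℝ)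
    (Θ : Finset (Fin t)) : Ker t q c Θ = 1 + NKer t q c Θ := by
  funext Φ' Φ
  simp [Ker, NKer, Matrix.add_apply, Matrix.one_apply]


/-- **Kernel tensors pairwise commute**: for any cumulant family satisfying
locality and null-vanishing, the kernel tensors of any two nonempty index
subsets commute as matrices (whether or not the subsets overlap). -/
theorem kernel_tensors_commute (t q : ℕ)
    (c : Finset (Fin t) → ((Fin t) → Fin (q + 1)) → ℝ)
    (hloc : ∀ (Θ : Finset (Fin t)) (φ φ' : (Fin t) → Fin (q + 1)),
      (∀ τ ∈ Θ, φ τ = φ' τ) → c Θ φ = c Θ φ')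
    (hnull : ∀ (Θ : Finset (Fin t)) (φ : (Fin t) → Fin (q + 1)),
      (∃ τ ∈ Θ, φ τ = 0) → c Θ φ = 0)
    (Θ₁ Θ₂ : Finset (Fin t)) (h₁ : Θ₁.Nonempty) (h₂ : Θ₂.Nonempty) :
    Ker t q c Θ₁ * Ker t q c Θ₂ = Ker t q c Θ₂ * Ker t q c Θ₁ := by
  have hN : NKer t q c Θ₁ * NKer t q c Θ₂ = NKer t q c Θ₂ * NKer t q c Θ₁ := by
    rw [NKer_mul_NKer t q c hloc hnull, NKer_mul_NKer t q c hloc hnull]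
    funext Φ' Φ
    simp only [disjoint_comm, Finset.union_comm]
    ring_nf
  have hC : Commute (NKer t q c Θ₁) (NKer t q c Θ₂) := hN
  rw [Ker_eq, Ker_eq]
  exact ((Commute.one_left _).add_left ((Commute.one_right _).add_right hC)).eq
end

section
/- Contraction of all kernel tensors yields the correlation tensor (main identity of Appendix A, Eq. (A5) in closed form): fix t, q : ℕ, I := Fin (q+1), and let c be a cumulant family satisfying locality and null-vanishing as above, with kernel tensors K Θ for nonempty Θ : Finset (Fin t) as above. Since the kernel tensors pairwise commute, their product over the finite set of all nonempty subsets Θ ⊆ Fin t is well defined independently of order (e.g., as a noncommProd with the commutativity witness). Define the correlation tensor 𝐂 : ((Fin t) → I) → ℝ by 𝐂 Φ := ∑ over all finite partitions π of the support supp Φ := {τ : Fin t | Φ τ ≠ 0} into nonempty blocks, of ∏_{B ∈ π} c B Φ (the empty partition of the empty support contributing 1). Then for every tuple Φ : (Fin t) → I, the entry of the product matrix ∏_{Θ nonempty} K Θ at row index the all-zero tuple and column index Φ equals 𝐂 Φ. -/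
/-- The support of an index tuple: the set of times carrying a non-null index. -/
def tupleSupp (t q : ℕ) (Φ : (Fin t) → Fin (q + 1)) : Finset (Fin t) :=
  Finset.univ.filter (fun τ => Φ τ ≠ 0)

/-- The correlation tensor defined from the cumulants by the moment–cumulant
partition sum: `𝐂 Φ = ∑_{π partition of supp Φ} ∏_{B ∈ π} c B Φ`, where the sum
runs over all collections of pairwise-disjoint nonempty blocks whose union is
`supp Φ` (the empty partition of the empty support contributing `1`). -/
def corr (t q : ℕ) (c : Finset (Fin t) → ((Fin t) → Fin (q + 1)) → ℝ)
    (Φ : (Fin t) → Fin (q + 1)) : ℝ :=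
  ∑ π ∈ Finset.univ.filter
      (fun π : Finset (Finset (Fin t)) =>
        (∀ B ∈ π, B.Nonempty) ∧
        (∀ B ∈ π, ∀ B' ∈ π, B ≠ B' → B ∩ B' = ∅) ∧
        π.sup id = tupleSupp t q Φ),
    ∏ B ∈ π, c B Φ

def zeroOn {t q : ℕ} (Θ : Finset (Fin t)) (Φ : (Fin t) → Fin (q + 1)) :
    (Fin t) → Fin (q + 1) := fun τ => if τ ∈ Θ then 0 else Φ τ

lemma tupleSupp_zeroOn (t q : ℕ) (Θ : Finset (Fin t)) (Φ : (Fin t) → Fin (q + 1)) :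
    tupleSupp t q (zeroOn Θ Φ) = tupleSupp t q Φ \ Θ := by
  ext τ
  by_cases hτ : τ ∈ Θ <;> simp [tupleSupp, zeroOn, hτ]

def gsum (t q : ℕ) (c : Finset (Fin t) → ((Fin t) → Fin (q + 1)) → ℝ)
    (S : Finset (Finset (Fin t))) (Φ : (Fin t) → Fin (q + 1)) : ℝ :=
  ∑ π ∈ Finset.univ.filter
      (fun π : Finset (Finset (Fin t)) =>
        (∀ B ∈ π, B ∈ S) ∧
        (∀ B ∈ π, ∀ B' ∈ π, B ≠ B' → B ∩ B' = ∅) ∧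
        π.sup id = tupleSupp t q Φ),
    ∏ B ∈ π, c B Φ

lemma mul_ker_apply (t q : ℕ) (c : Finset (Fin t) → ((Fin t) → Fin (q + 1)) → ℝ)
    (P : Matrix ((Fin t) → Fin (q + 1)) ((Fin t) → Fin (q + 1)) ℝ)
    (Θ : Finset (Fin t)) (Ψ₀ Φ : (Fin t) → Fin (q + 1)) :
    (P * Ker t q c Θ) Ψ₀ Φ = P Ψ₀ Φ + P Ψ₀ (zeroOn Θ Φ) * c Θ Φ := by
  have hiff : ∀ Ψ : (Fin t) → Fin (q + 1),
      ((∀ τ ∉ Θ, Ψ τ = Φ τ) ∧ (∀ τ ∈ Θ, Ψ τ = 0)) ↔ Ψ = zeroOn Θ Φ := by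
    intro Ψ
    constructor
    · rintro ⟨h1, h2⟩
      funext τ
      by_cases hτ : τ ∈ Θ
      · simp [zeroOn, hτ, h2 τ hτ]
      · simp [zeroOn, hτ, h1 τ hτ]
    · rintro rfl
      refine ⟨fun τ hτ => ?_, fun τ hτ => ?_⟩ <;> simp [zeroOn, hτ]
  simp only [Matrix.mul_apply, Ker, hiff, mul_add, Finset.sum_add_distrib]
  congr 1
  · simp
  · simp only [mul_ite, mul_one, mul_zero, ite_mul, zero_mul, ← mul_assoc]
    rw [Finset.sum_ite_eq' Finset.univ (zeroOn Θ Φ) (fun Ψ => P Ψ₀ Ψ * c Θ Φ)]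
    simp

lemma gsum_insert (t q : ℕ) (c : Finset (Fin t) → ((Fin t) → Fin (q + 1)) → ℝ)
    (hloc : ∀ (Θ : Finset (Fin t)) (φ φ' : (Fin t) → Fin (q + 1)),
      (∀ τ ∈ Θ, φ τ = φ' τ) → c Θ φ = c Θ φ')
    (hnull : ∀ (Θ : Finset (Fin t)) (φ : (Fin t) → Fin (q + 1)),
      (∃ τ ∈ Θ, φ τ = 0) → c Θ φ = 0)
    (Θ : Finset (Fin t)) (S : Finset (Finset (Fin t))) (hΘS : Θ ∉ S)
    (Φ : (Fin t) → Fin (q + 1)) :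
    gsum t q c (insert Θ S) Φ = gsum t q c S Φ + gsum t q c S (zeroOn Θ Φ) * c Θ Φ := by
  classical
  rw [gsum, ← Finset.sum_filter_add_sum_filter_not _ (fun π => Θ ∈ π), add_comm]
  congr 1
  · -- Θ ∉ π piece equals gsum S Φ
    rw [gsum, Finset.filter_filter]
    apply Finset.sum_congr _ (fun _ _ => rfl)
    ext π
    simp only [Finset.mem_filter, Finset.mem_univ, true_and, Finset.mem_insert]
    constructor
    · rintro ⟨⟨h1, h2, h3⟩, h4⟩
      exact ⟨fun B hB => ((h1 B hB).resolve_left (fun h => h4 (h ▸ hB))), h2, h3⟩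
    · rintro ⟨h1, h2, h3⟩
      exact ⟨⟨fun B hB => Or.inr (h1 B hB), h2, h3⟩, fun hΘ => hΘS (h1 Θ hΘ)⟩
  · -- Θ ∈ π piece
    by_cases hc : ∃ τ ∈ Θ, Φ τ = 0
    · rw [hnull Θ Φ hc, mul_zero]
      refine Finset.sum_eq_zero (fun π hπ => ?_)
      simp only [Finset.mem_filter] at hπ
      exact Finset.prod_eq_zero hπ.2 (hnull Θ Φ hc)
    · push_neg at hc
      have hΘsub : Θ ⊆ tupleSupp t q Φ := fun τ hτ => by
        simp [tupleSupp, hc τ hτ]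
      rw [gsum, Finset.sum_mul]
      refine Finset.sum_nbij' (fun π => π.erase Θ) (fun σ => insert Θ σ) ?_ ?_ ?_ ?_ ?_
      · -- hi
        intro π hπ
        simp only [Finset.mem_filter, Finset.mem_univ, true_and] at hπ ⊢
        obtain ⟨⟨h1, h2, h3⟩, h4⟩ := hπ
        refine ⟨fun B hB => ?_, fun B hB B' hB' => h2 B (Finset.mem_of_mem_erase hB) B'
          (Finset.mem_of_mem_erase hB'), ?_⟩
        · rcases Finset.mem_erase.1 hB with ⟨hne, hBπ⟩
          exact (Finset.mem_insert.1 (h1 B hBπ)).resolve_left hne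
        · rw [tupleSupp_zeroOn, ← h3]
          apply le_antisymm
          · refine Finset.sup_le (fun B hB => ?_)
            rcases Finset.mem_erase.1 hB with ⟨hne, hBπ⟩
            intro τ hτ
            refine Finset.mem_sdiff.2 ⟨Finset.le_sup (f := id) hBπ hτ, fun hτΘ => ?_⟩
            have := h2 B hBπ Θ h4 hne
            have : τ ∈ B ∩ Θ := Finset.mem_inter.2 ⟨hτ, hτΘ⟩
            simp_all
          · intro τ hτ
            rcases Finset.mem_sdiff.1 hτ with ⟨hτs, hτΘ⟩
            rcases Finset.mem_sup.1 hτs with ⟨B, hBπ, hτB⟩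
            refine Finset.le_sup (f := id) (Finset.mem_erase.2 ⟨?_, hBπ⟩) hτB
            rintro rfl
            exact hτΘ hτB
      · -- hj
        intro σ hσ
        simp only [Finset.mem_filter, Finset.mem_univ, true_and] at hσ ⊢
        obtain ⟨h1, h2, h3⟩ := hσ
        rw [tupleSupp_zeroOn] at h3
        have hdisj : ∀ B ∈ σ, B ∩ Θ = ∅ := by
          intro B hB
          have hBsub : B ⊆ tupleSupp t q Φ \ Θ := h3 ▸ Finset.le_sup (f := id) hB
          rw [Finset.eq_empty_iff_forall_notMem]
          intro τ hτ
          rcases Finset.mem_inter.1 hτ with ⟨hτB, hτΘ⟩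
          exact (Finset.mem_sdiff.1 (hBsub hτB)).2 hτΘ
        refine ⟨⟨fun B hB => by
            rcases Finset.mem_insert.1 hB with h | h
            · exact Finset.mem_insert.2 (Or.inl h)
            · exact Finset.mem_insert.2 (Or.inr (h1 B h)), ?_, ?_⟩,
            Finset.mem_insert_self _ _⟩
        · intro B hB B' hB' hne
          rcases Finset.mem_insert.1 hB with hBΘ | hB
          · rcases Finset.mem_insert.1 hB' with hB'Θ | hB'
            · exact absurd (hBΘ.trans hB'Θ.symm) hne
            · rw [hBΘ, Finset.inter_comm]; exact hdisj B' hB'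
          · rcases Finset.mem_insert.1 hB' with hB'Θ | hB'
            · rw [hB'Θ]; exact hdisj B hB
            · exact h2 B hB B' hB' hne
        · rw [Finset.sup_insert, h3, id]
          exact Finset.union_sdiff_of_subset hΘsub
      · -- left inverse
        intro π hπ
        simp only [Finset.mem_filter] at hπ
        exact Finset.insert_erase hπ.2
      · -- right inverse
        intro σ hσ
        simp only [Finset.mem_filter, Finset.mem_univ, true_and] at hσ
        exact Finset.erase_insert (fun h => hΘS (hσ.1 Θ h))
      · -- values
        intro π hπ
        simp only [Finset.mem_filter, Finset.mem_univ, true_and] at hπ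
        obtain ⟨⟨h1, h2, h3⟩, h4⟩ := hπ
        rw [← Finset.mul_prod_erase _ _ h4, mul_comm]
        congr 1
        refine Finset.prod_congr rfl (fun B hB => ?_)
        rcases Finset.mem_erase.1 hB with ⟨hne, hBπ⟩
        refine hloc B Φ (zeroOn Θ Φ) (fun τ hτ => ?_)
        have hd := h2 B hBπ Θ h4 hne
        have hτΘ : τ ∉ Θ := fun h => by
          have : τ ∈ B ∩ Θ := Finset.mem_inter.2 ⟨hτ, h⟩
          simp_all
        simp [zeroOn, hτΘ]

lemma main_induction (t q : ℕ) (c : Finset (Fin t) → ((Fin t) → Fin (q + 1)) → ℝ)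
    (hloc : ∀ (Θ : Finset (Fin t)) (φ φ' : (Fin t) → Fin (q + 1)),
      (∀ τ ∈ Θ, φ τ = φ' τ) → c Θ φ = c Θ φ')
    (hnull : ∀ (Θ : Finset (Fin t)) (φ : (Fin t) → Fin (q + 1)),
      (∃ τ ∈ Θ, φ τ = 0) → c Θ φ = 0)
    (S : Finset (Finset (Fin t))) :
    ∀ (h : (S : Set (Finset (Fin t))).Pairwise
        (fun Θ₁ Θ₂ => Commute (Ker t q c Θ₁) (Ker t q c Θ₂)))
      (Φ : (Fin t) → Fin (q + 1)),
      (S.noncommProd (fun Θ => Ker t q c Θ) h) (fun _ => (0 : Fin (q + 1))) Φ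
        = gsum t q c S Φ := by
  classical
  induction S using Finset.induction_on with
  | empty =>
    intro h Φ
    rw [Finset.noncommProd_empty]
    by_cases hΦ : Φ = (fun _ => (0 : Fin (q + 1)))
    · subst hΦ
      rw [Matrix.one_apply_eq]
      rw [gsum]
      have hset : Finset.univ.filter
          (fun π : Finset (Finset (Fin t)) =>
            (∀ B ∈ π, B ∈ (∅ : Finset (Finset (Fin t)))) ∧
            (∀ B ∈ π, ∀ B' ∈ π, B ≠ B' → B ∩ B' = ∅) ∧
            π.sup id = tupleSupp t q (fun _ => 0)) = {∅} := by
        ext π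
        simp only [Finset.mem_filter, Finset.mem_univ, true_and, Finset.mem_singleton]
        constructor
        · rintro ⟨h1, -, -⟩
          exact Finset.eq_empty_of_forall_notMem (fun B hB => by simpa using h1 B hB)
        · rintro rfl
          refine ⟨by simp, by simp, ?_⟩
          simp [tupleSupp]
      rw [hset]
      simp
    · rw [Matrix.one_apply_ne (fun h => hΦ h.symm)]
      rw [gsum]
      have hΦ' : tupleSupp t q Φ ≠ ∅ := by
        intro h
        apply hΦ
        funext τ
        by_contra hτ
        have : τ ∈ tupleSupp t q Φ := by simp [tupleSupp, hτ]
        simp [h] at this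
      have hset : Finset.univ.filter
          (fun π : Finset (Finset (Fin t)) =>
            (∀ B ∈ π, B ∈ (∅ : Finset (Finset (Fin t)))) ∧
            (∀ B ∈ π, ∀ B' ∈ π, B ≠ B' → B ∩ B' = ∅) ∧
            π.sup id = tupleSupp t q Φ) = ∅ := by
        ext π
        simp only [Finset.mem_filter, Finset.mem_univ, true_and, Finset.notMem_empty,
          iff_false, not_and]
        intro h1 _ h3
        have : π = ∅ := Finset.eq_empty_of_forall_notMem (fun B hB => by simpa using h1 B hB)
        subst this
        simp at h3
        exact hΦ' h3.symm
      rw [hset, Finset.sum_empty]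
  | @insert Θ S' hΘS ih =>
    intro h Φ
    rw [Finset.noncommProd_insert_of_notMem' _ _ _ _ hΘS]
    rw [mul_ker_apply, ih _ Φ, ih _ (zeroOn Θ Φ),
      gsum_insert t q c hloc hnull Θ S' hΘS Φ]

/-- **Contraction of all kernel tensors yields the correlation tensor** (main
identity of Appendix A, Eq. (A5) in closed form): the entry of the (order
independent) product of all kernel tensors, at row the all-zero tuple and
column `Φ`, equals the moment–cumulant partition sum `𝐂 Φ`. -/
theorem kernel_contraction_eq_corr (t q : ℕ)
    (c : Finset (Fin t) → ((Fin t) → Fin (q + 1)) → ℝ)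
    (hloc : ∀ (Θ : Finset (Fin t)) (φ φ' : (Fin t) → Fin (q + 1)),
      (∀ τ ∈ Θ, φ τ = φ' τ) → c Θ φ = c Θ φ')
    (hnull : ∀ (Θ : Finset (Fin t)) (φ : (Fin t) → Fin (q + 1)),
      (∃ τ ∈ Θ, φ τ = 0) → c Θ φ = 0)
    (hcomm : ((Finset.univ.filter (fun Θ : Finset (Fin t) => Θ.Nonempty)) :
        Set (Finset (Fin t))).Pairwise
        (fun Θ₁ Θ₂ => Commute (Ker t q c Θ₁) (Ker t q c Θ₂)))
    (Φ : (Fin t) → Fin (q + 1)) :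
    ((Finset.univ.filter (fun Θ : Finset (Fin t) => Θ.Nonempty)).noncommProd
        (fun Θ => Ker t q c Θ) hcomm)
      (fun _ => (0 : Fin (q + 1))) Φ = corr t q c Φ := by
  rw [main_induction t q c hloc hnull _ hcomm Φ, gsum, corr]
  apply Finset.sum_congr _ (fun _ _ => rfl)
  ext π
  simp
end
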